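/- For a valid CSR representation of a matrix A, the CSR matrix-vector product, defined row-wise by y(i) = Σ_{k = IA(i)}^{IA(i+1)-1} AA(k) * x(JA(k)), equals A·x. -/

import Mathlib

open Finset in
theorem csr_spmv_correct (n m nnz : ℕ)
    (A : Matrix (Fin n) (Fin m) ℝ)
    (AA : Fin nnz → ℝ) (JA : Fin nnz → Fin m) (IA : Fin (n + 1) → ℕ)
    (hmono : Monotone IA) (h0 : IA 0 = 0) (hlast : IA (Fin.last n) = nnz)
    (hval : ∀ (i : Fin n) (k : Fin nnz),
      IA i.castSucc ≤ k.1 → k.1 < IA i.succ → A i (JA k) = AA k)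
    (hinj : ∀ i : Fin n,
      Set.InjOn JA {k : Fin nnz | IA i.castSucc ≤ k.1 ∧ k.1 < IA i.succ})
    (hzero : ∀ (i : Fin n) (j : Fin m),
      (∀ k : Fin nnz, IA i.castSucc ≤ k.1 → k.1 < IA i.succ → JA k ≠ j) → A i j = 0)
    (x : Fin m → ℝ) :
    ∀ i : Fin n, A.mulVec x i =
      ∑ k ∈ univ.filter (fun k : Fin nnz => IA i.castSucc ≤ k.1 ∧ k.1 < IA i.succ),
        AA k * x (JA k) := by
  intro i
  set S := univ.filter (fun k : Fin nnz => IA i.castSucc ≤ k.1 ∧ k.1 < IA i.succ) with hS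
  have himg : ∑ j ∈ S.image JA, A i j * x j = ∑ k ∈ S, A i (JA k) * x (JA k) := by
    apply Finset.sum_image
    intro a ha b hb hab
    simp only [hS, mem_coe, mem_filter] at ha hb
    exact hinj i ⟨ha.2.1, ha.2.2⟩ ⟨hb.2.1, hb.2.2⟩ hab
  have hsub : ∑ j, A i j * x j = ∑ j ∈ S.image JA, A i j * x j := by
    refine (Finset.sum_subset (Finset.subset_univ _) ?_).symm
    intro j _ hj
    have : A i j = 0 := by
      apply hzero i j
      intro k hk1 hk2 hkj
      exact hj (Finset.mem_image.mpr ⟨k, by simp [hS, hk1, hk2], hkj⟩)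
    simp [this]
  rw [Matrix.mulVec, dotProduct, hsub, himg]
  apply Finset.sum_congr rfl
  intro k hk
  simp only [hS, mem_filter] at hk
  rw [hval i k hk.2.1 hk.2.2]
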